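/- Let Γ be a countable set with metric ρ, and let H be a bounded self-adjoint operator on ℓ²(Γ) whose matrix entries satisfy S_α = sup_x Σ_{y≠x} |H(x,y)| e^{α ρ(x,y)} < ∞ for some α > 0. Then for any z ∉ σ(H) with Δ = dist(z, σ(H)) > 0 and any x, y ∈ Γ, the resolvent entries satisfy |(H−z)⁻¹(x,y)| ≤ (2/Δ)·exp(−(αΔ/(Δ+2S_α))·ρ(x,y)). -/

import Mathlib

set_option maxHeartbeats 1600000

open scoped ENNReal ComplexConjugate

namespace AizenmanAux

/-! ### Elementary real / ENNReal inequalities -/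

lemma ofReal_norm_eq_coe_nnnorm {E : Type*} [SeminormedAddCommGroup E] (a : E) :
    ENNReal.ofReal ‖a‖ = (‖a‖₊ : ℝ≥0∞) := ofReal_norm a

private lemma amgm_aux {a b : ℝ≥0∞} (h : a ≤ b) : a * b * 2 ≤ a * a + b * b := by
  obtain ⟨c, rfl⟩ := le_iff_exists_add.mp h
  have h' : a * a + (a + c) * (a + c) = a * (a + c) * 2 + c * c := by ring
  rw [h']; exact le_self_add

lemma amgm (a b : ℝ≥0∞) : a * b * 2 ≤ a * a + b * b := by
  rcases le_total a b with h | h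
  · exact amgm_aux h
  · have := amgm_aux h; rwa [mul_comm b a, add_comm (b*b)] at this

lemma ennnorm_tsum_le {ι : Type*} (f : ι → ℂ) :
    (‖∑' i, f i‖₊ : ℝ≥0∞) ≤ ∑' i, (‖f i‖₊ : ℝ≥0∞) := by
  by_cases h : Summable fun i => ‖f i‖
  · have h1 : ‖∑' i, f i‖ ≤ ∑' i, ‖f i‖ := norm_tsum_le_tsum_norm h
    have h2 : Summable fun i => ‖f i‖₊ := by rw [← NNReal.summable_coe]; exact h
    calc (‖∑' i, f i‖₊ : ℝ≥0∞) ≤ (↑(∑' i, ‖f i‖₊) : ℝ≥0∞) := by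
          rw [ENNReal.coe_le_coe, ← NNReal.coe_le_coe]
          simpa [NNReal.coe_tsum] using h1
      _ = ∑' i, (‖f i‖₊ : ℝ≥0∞) := ENNReal.coe_tsum h2
  · rw [tsum_eq_zero_of_not_summable (by simpa [← summable_norm_iff] using h)]
    simp

lemma min_lipschitz (a b c : ℝ) : |min a c - min b c| ≤ |a - b| := by
  rcases le_total a c with h1 | h1 <;> rcases le_total b c with h2 | h2 <;>
    rw [abs_sub_le_iff] <;> constructor <;>
    simp only [min_eq_left, min_eq_right, h1, h2] <;>
    cases' abs_sub_le_iff.mp (le_refl |a - b|) with ha hb <;> linarith [abs_nonneg (a - b)]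

lemma two_le_exp_add_exp_neg (s : ℝ) : 2 ≤ Real.exp (-s) + Real.exp s := by
  have ha : 0 < Real.exp s := Real.exp_pos s
  rw [Real.exp_neg]
  have h1 : (Real.exp s)⁻¹ * Real.exp s = 1 := inv_mul_cancel₀ ha.ne'
  nlinarith [sq_nonneg (Real.exp s - 1)]

lemma abs_exp_sub_one_le {s t : ℝ} (hs : |s| ≤ t) : |Real.exp s - 1| ≤ Real.exp t - 1 := by
  rcases le_total 0 s with h | h
  · rw [abs_of_nonneg (by linarith [Real.one_le_exp h] : (0:ℝ) ≤ Real.exp s - 1)]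
    have h' : s ≤ t := le_trans (le_abs_self s) hs
    linarith [Real.exp_le_exp.mpr h']
  · rw [abs_of_nonpos (by linarith [Real.exp_le_one_iff.mpr h] : Real.exp s - 1 ≤ 0)]
    have h1 : -s ≤ t := le_trans (neg_le_abs s) hs
    have h2 : Real.exp (-s) ≤ Real.exp t := Real.exp_le_exp.mpr h1
    linarith [two_le_exp_add_exp_neg s]

lemma exp_sub_one_le_mul {c s : ℝ} (hc0 : 0 ≤ c) (hc1 : c ≤ 1) (hs : 0 ≤ s) :
    Real.exp (c * s) - 1 ≤ c * (Real.exp s - 1) := by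
  have h := convexOn_exp.2 (Set.mem_univ s) (Set.mem_univ (0:ℝ)) hc0
    (sub_nonneg.mpr hc1 : (0:ℝ) ≤ 1 - c) (by ring)
  simp only [smul_eq_mul, mul_zero, add_zero, Real.exp_zero, mul_one] at h
  linarith

lemma kernel_exp_bound {α η d s : ℝ} (hα : 0 < α) (hη : 0 ≤ η) (hηα : η ≤ α)
    (hd : 0 ≤ d) (hs : |s| ≤ η * d) :
    |Real.exp s - 1| ≤ η / α * Real.exp (α * d) := by
  have h1 : |Real.exp s - 1| ≤ Real.exp (η * d) - 1 := abs_exp_sub_one_le hs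
  have hc0 : 0 ≤ η / α := div_nonneg hη hα.le
  have hc1 : η / α ≤ 1 := (div_le_one hα).mpr hηα
  have h2 : Real.exp (η * d) - 1 ≤ η / α * (Real.exp (α * d) - 1) := by
    have h' : η / α * (α * d) = η * d := by field_simp
    calc Real.exp (η * d) - 1 = Real.exp (η / α * (α * d)) - 1 := by rw [h']
      _ ≤ η / α * (Real.exp (α * d) - 1) :=
        exp_sub_one_le_mul hc0 hc1 (by positivity)
  calc |Real.exp s - 1| ≤ η / α * (Real.exp (α * d) - 1) := le_trans h1 h2
    _ ≤ η / α * Real.exp (α * d) := by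
      apply mul_le_mul_of_nonneg_left _ hc0
      linarith [Real.exp_pos (α * d)]

/-! ### Multiplication operators on `ℓ²` -/

section MulOp
variable {Γ : Type*}

lemma pointwise_mul_bound {w : Γ → ℂ} {c : ℝ} (hw : ∀ u, ‖w u‖ ≤ c)
    (f : lp (fun _ : Γ => ℂ) 2) (u : Γ) :
    ‖w u * f u‖ ^ (2:ℝ≥0∞).toReal ≤ c ^ (2:ℝ≥0∞).toReal * ‖f u‖ ^ (2:ℝ≥0∞).toReal := by
  rw [← Real.mul_rpow (le_trans (norm_nonneg _) (hw u)) (norm_nonneg _)]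
  apply Real.rpow_le_rpow (norm_nonneg _) ?_ (by norm_num)
  calc ‖w u * f u‖ ≤ ‖w u‖ * ‖f u‖ := norm_mul_le _ _
    _ ≤ c * ‖f u‖ := mul_le_mul_of_nonneg_right (hw u) (norm_nonneg _)

lemma memℓp_two_mul {w : Γ → ℂ} {c : ℝ} (hw : ∀ u, ‖w u‖ ≤ c)
    (f : lp (fun _ : Γ => ℂ) 2) : Memℓp (fun u => w u * f u) 2 := by
  apply memℓp_gen
  have hf : Summable fun u => ‖f u‖ ^ (2:ℝ≥0∞).toReal :=
    (lp.memℓp f).summable (by norm_num)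
  exact Summable.of_nonneg_of_le (fun u => by positivity)
    (fun u => pointwise_mul_bound hw f u) (hf.mul_left _)

lemma lp_norm_le_of_mul {w : Γ → ℂ} {c : ℝ} (hc : 0 ≤ c) (hw : ∀ u, ‖w u‖ ≤ c)
    (f : lp (fun _ : Γ => ℂ) 2) :
    ‖(⟨fun u => w u * f u, memℓp_two_mul hw f⟩ : lp (fun _ : Γ => ℂ) 2)‖ ≤ c * ‖f‖ := by
  set g : lp (fun _ : Γ => ℂ) 2 := ⟨fun u => w u * f u, memℓp_two_mul hw f⟩ with hg
  have h2 : (0:ℝ) < (2:ℝ≥0∞).toReal := by norm_num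
  have hsum_f : Summable fun u => ‖f u‖ ^ (2:ℝ≥0∞).toReal := (lp.memℓp f).summable h2
  have key : ∑' u, ‖g u‖ ^ (2:ℝ≥0∞).toReal
      ≤ c ^ (2:ℝ≥0∞).toReal * ∑' u, ‖f u‖ ^ (2:ℝ≥0∞).toReal := by
    rw [← tsum_mul_left]
    exact Summable.tsum_le_tsum (fun u => pointwise_mul_bound hw f u)
      ((lp.memℓp g).summable h2) (hsum_f.mul_left _)
  rw [lp.norm_eq_tsum_rpow h2, lp.norm_eq_tsum_rpow h2]
  calc (∑' u, ‖g u‖ ^ (2:ℝ≥0∞).toReal) ^ (1/(2:ℝ≥0∞).toReal)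
      ≤ (c ^ (2:ℝ≥0∞).toReal * ∑' u, ‖f u‖ ^ (2:ℝ≥0∞).toReal) ^ (1/(2:ℝ≥0∞).toReal) :=
        Real.rpow_le_rpow (tsum_nonneg fun u => by positivity) key (by positivity)
    _ = c * (∑' u, ‖f u‖ ^ (2:ℝ≥0∞).toReal) ^ (1/(2:ℝ≥0∞).toReal) := by
        rw [Real.mul_rpow (by positivity) (tsum_nonneg fun u => by positivity),
          ← Real.rpow_mul hc]
        norm_num

noncomputable def mulOp (w : Γ → ℂ) (c : ℝ) (hc : 0 ≤ c) (hw : ∀ u, ‖w u‖ ≤ c) :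
    lp (fun _ : Γ => ℂ) 2 →L[ℂ] lp (fun _ : Γ => ℂ) 2 :=
  LinearMap.mkContinuous
    { toFun := fun f => ⟨fun u => w u * f u, memℓp_two_mul hw f⟩
      map_add' := fun f g => by
        ext u
        simp [mul_add, lp.coeFn_add]; rfl
      map_smul' := fun m f => by
        ext u
        simp [lp.coeFn_smul]
        ring } c
    (fun f => lp_norm_le_of_mul hc hw f)

@[simp] lemma mulOp_apply (w : Γ → ℂ) (c : ℝ) (hc : 0 ≤ c) (hw : ∀ u, ‖w u‖ ≤ c)
    (f : lp (fun _ : Γ => ℂ) 2) (u : Γ) : (mulOp w c hc hw f) u = w u * f u := rfl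

lemma mulOp_norm_le (w : Γ → ℂ) (c : ℝ) (hc : 0 ≤ c) (hw : ∀ u, ‖w u‖ ≤ c) :
    ‖mulOp w c hc hw‖ ≤ c :=
  LinearMap.mkContinuous_norm_le _ hc _

end MulOp

/-! ### Matrix entries -/

section Entries
variable {Γ : Type*} [DecidableEq Γ]

noncomputable def dl (x : Γ) : lp (fun _ : Γ => ℂ) 2 := lp.single 2 x 1

lemma inner_single_left (x : Γ) (g : lp (fun _ : Γ => ℂ) 2) :
    (inner ℂ (dl x) g : ℂ) = g x := by
  rw [lp.inner_eq_tsum (𝕜 := ℂ), tsum_eq_single x]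
  · simp [dl, lp.single_apply_self, RCLike.inner_apply]
  · intro b hb; simp [dl, lp.single_apply_ne _ _ _ hb, RCLike.inner_apply, Pi.single_eq_of_ne hb]

lemma norm_dl (x : Γ) : ‖(dl x : lp (fun _ : Γ => ℂ) 2)‖ = 1 := by
  have := lp.norm_single (p := 2) (E := fun _ : Γ => ℂ) (by norm_num) x (1:ℂ)
  simpa [dl] using this

variable (H : lp (fun _ : Γ => ℂ) 2 →L[ℂ] lp (fun _ : Γ => ℂ) 2)

noncomputable def ent (u v : Γ) : ℂ := (H (dl v)) u

lemma ent_eq_inner (u v : Γ) : ent H u v = inner ℂ (dl u) (H (dl v)) :=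
  (inner_single_left u _).symm

variable {H}

lemma conj_ent (hH : IsSelfAdjoint H) (u v : Γ) : conj (ent H u v) = ent H v u := by
  have h := hH.isSymmetric (dl v) (dl u)
  simp only [ContinuousLinearMap.coe_coe] at h
  rw [ent_eq_inner, ent_eq_inner, inner_conj_symm]
  exact h

lemma norm_ent_symm (hH : IsSelfAdjoint H) (u v : Γ) : ‖ent H u v‖ = ‖ent H v u‖ := by
  rw [← conj_ent hH u v, RCLike.norm_conj]

lemma summable_apply (hH : IsSelfAdjoint H) (f : lp (fun _ : Γ => ℂ) 2) (u : Γ) :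
    Summable fun v => ent H u v * f v := by
  have h := lp.summable_inner (𝕜 := ℂ) (H (dl u)) f
  apply h.congr
  intro v
  rw [RCLike.inner_apply]
  rw [mul_comm]
  congr 1
  exact conj_ent hH v u

lemma apply_eq_tsum (hH : IsSelfAdjoint H) (f : lp (fun _ : Γ => ℂ) 2) (u : Γ) :
    (H f) u = ∑' v, ent H u v * f v := by
  have h := hH.isSymmetric (dl u) f
  simp only [ContinuousLinearMap.coe_coe] at h
  rw [← inner_single_left u (H f), ← h, lp.inner_eq_tsum (𝕜 := ℂ)]
  congr 1
  funext v
  rw [RCLike.inner_apply]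
  rw [mul_comm]
  congr 1
  exact conj_ent hH v u

end Entries

/-! ### Schur test -/

lemma lp2_tsum_sq {Γ : Type*} (g : lp (fun _ : Γ => ℂ) 2) :
    ∑' u, (‖g u‖₊ : ℝ≥0∞) * ‖g u‖₊ = (‖g‖₊ : ℝ≥0∞) * ‖g‖₊ := by
  have h2 : (0:ℝ) < (2:ℝ≥0∞).toReal := by norm_num
  have hs := lp.hasSum_norm h2 g
  have hsum : Summable fun u => ‖g u‖ ^ (2:ℝ≥0∞).toReal := hs.summable
  have ht : ∑' u, ‖g u‖ ^ (2:ℝ≥0∞).toReal = ‖g‖ ^ (2:ℝ≥0∞).toReal := hs.tsum_eq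
  have heq : ∑' u, ENNReal.ofReal (‖g u‖ ^ (2:ℝ≥0∞).toReal)
      = ENNReal.ofReal (‖g‖ ^ (2:ℝ≥0∞).toReal) := by
    rw [← ENNReal.ofReal_tsum_of_nonneg (fun u => by positivity) hsum, ht]
  have hpow : ∀ r : ℝ, 0 ≤ r → ENNReal.ofReal (r ^ (2:ℝ≥0∞).toReal)
      = ENNReal.ofReal r * ENNReal.ofReal r := by
    intro r hr
    have h' : r ^ (2:ℝ≥0∞).toReal = r * r := by
      rw [ENNReal.toReal_ofNat]
      rw [show (2:ℝ) = ((2:ℕ):ℝ) by norm_num, Real.rpow_natCast]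
      ring
    rw [h', ENNReal.ofReal_mul hr]
  calc ∑' u, (‖g u‖₊ : ℝ≥0∞) * ‖g u‖₊
      = ∑' u, ENNReal.ofReal (‖g u‖ ^ (2:ℝ≥0∞).toReal) := by
        congr 1; funext u; rw [hpow _ (norm_nonneg _), ofReal_norm_eq_coe_nnnorm]
    _ = ENNReal.ofReal (‖g‖ ^ (2:ℝ≥0∞).toReal) := heq
    _ = (‖g‖₊ : ℝ≥0∞) * ‖g‖₊ := by rw [hpow _ (norm_nonneg _), ofReal_norm_eq_coe_nnnorm]

lemma schur_bound {Γ : Type*} [DecidableEq Γ]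
    (T : lp (fun _ : Γ => ℂ) 2 →L[ℂ] lp (fun _ : Γ => ℂ) 2)
    (k : Γ → Γ → ℂ)
    (hk : ∀ f u, (T f) u = ∑' v, k u v * f v)
    (c : ℝ) (hc : 0 ≤ c)
    (hrow : ∀ u, ∑' v, (‖k u v‖₊ : ℝ≥0∞) ≤ ENNReal.ofReal c)
    (hcol : ∀ v, ∑' u, (‖k u v‖₊ : ℝ≥0∞) ≤ ENNReal.ofReal c) :
    ‖T‖ ≤ c := by
  have key : ∀ f g : lp (fun _ : Γ => ℂ) 2, ‖f‖ ≤ 1 → ‖g‖ ≤ 1 →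
      (‖(inner ℂ g (T f) : ℂ)‖₊ : ℝ≥0∞) ≤ ENNReal.ofReal c := by
    intro f g hf hg
    set C := ENNReal.ofReal c with hC
    have step1 : (‖(inner ℂ g (T f) : ℂ)‖₊ : ℝ≥0∞)
        ≤ ∑' u, (‖g u‖₊ : ℝ≥0∞) * ‖(T f) u‖₊ := by
      rw [lp.inner_eq_tsum (𝕜 := ℂ)]
      refine le_trans (ennnorm_tsum_le _) ?_
      refine ENNReal.tsum_le_tsum fun u => ?_
      simp [RCLike.inner_apply, nnnorm_mul, mul_comm]
    have step2 : ∀ u, (‖(T f) u‖₊ : ℝ≥0∞) ≤ ∑' v, (‖k u v‖₊ : ℝ≥0∞) * ‖f v‖₊ := by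
      intro u
      rw [hk f u]
      refine le_trans (ennnorm_tsum_le _) ?_
      refine ENNReal.tsum_le_tsum fun v => ?_
      simp [nnnorm_mul]
    have step3 : (‖(inner ℂ g (T f) : ℂ)‖₊ : ℝ≥0∞)
        ≤ ∑' u, ∑' v, (‖g u‖₊ : ℝ≥0∞) * ‖k u v‖₊ * ‖f v‖₊ := by
      refine step1.trans (ENNReal.tsum_le_tsum fun u => ?_)
      calc (‖g u‖₊ : ℝ≥0∞) * ‖(T f) u‖₊
          ≤ (‖g u‖₊ : ℝ≥0∞) * ∑' v, (‖k u v‖₊ : ℝ≥0∞) * ‖f v‖₊ :=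
            mul_le_mul_right (step2 u) _
        _ = ∑' v, (‖g u‖₊ : ℝ≥0∞) * ((‖k u v‖₊ : ℝ≥0∞) * ‖f v‖₊) :=
            ENNReal.tsum_mul_left.symm
        _ = ∑' v, (‖g u‖₊ : ℝ≥0∞) * ‖k u v‖₊ * ‖f v‖₊ := by simp [mul_assoc]
    have step4 : (∑' u, ∑' v, (‖g u‖₊ : ℝ≥0∞) * ‖k u v‖₊ * ‖f v‖₊) * 2
        ≤ C * ((‖g‖₊ : ℝ≥0∞) * ‖g‖₊) + C * ((‖f‖₊ : ℝ≥0∞) * ‖f‖₊) := by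
      have pointwise : ∀ u v, (‖g u‖₊ : ℝ≥0∞) * ‖k u v‖₊ * ‖f v‖₊ * 2
          ≤ (‖k u v‖₊ : ℝ≥0∞) * ((‖g u‖₊ : ℝ≥0∞) * ‖g u‖₊)
            + (‖k u v‖₊ : ℝ≥0∞) * ((‖f v‖₊ : ℝ≥0∞) * ‖f v‖₊) := by
        intro u v
        have h := amgm (‖g u‖₊ : ℝ≥0∞) (‖f v‖₊ : ℝ≥0∞)
        calc (‖g u‖₊ : ℝ≥0∞) * ‖k u v‖₊ * ‖f v‖₊ * 2
            = (‖k u v‖₊ : ℝ≥0∞) * ((‖g u‖₊ : ℝ≥0∞) * ‖f v‖₊ * 2) := by ring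
          _ ≤ (‖k u v‖₊ : ℝ≥0∞) * ((‖g u‖₊ : ℝ≥0∞) * ‖g u‖₊ + (‖f v‖₊ : ℝ≥0∞) * ‖f v‖₊) :=
              mul_le_mul_right h _
          _ = _ := by ring
      calc (∑' u, ∑' v, (‖g u‖₊ : ℝ≥0∞) * ‖k u v‖₊ * ‖f v‖₊) * 2
          = ∑' u, ∑' v, (‖g u‖₊ : ℝ≥0∞) * ‖k u v‖₊ * ‖f v‖₊ * 2 := by
            rw [← ENNReal.tsum_mul_right]
            exact tsum_congr fun u => by rw [← ENNReal.tsum_mul_right]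
        _ ≤ ∑' u, ∑' v, ((‖k u v‖₊ : ℝ≥0∞) * ((‖g u‖₊ : ℝ≥0∞) * ‖g u‖₊)
              + (‖k u v‖₊ : ℝ≥0∞) * ((‖f v‖₊ : ℝ≥0∞) * ‖f v‖₊)) :=
            ENNReal.tsum_le_tsum fun u => ENNReal.tsum_le_tsum fun v => pointwise u v
        _ = (∑' u, ∑' v, (‖k u v‖₊ : ℝ≥0∞) * ((‖g u‖₊ : ℝ≥0∞) * ‖g u‖₊))
              + ∑' u, ∑' v, (‖k u v‖₊ : ℝ≥0∞) * ((‖f v‖₊ : ℝ≥0∞) * ‖f v‖₊) := by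
            rw [← ENNReal.tsum_add]
            exact tsum_congr fun u => ENNReal.tsum_add
        _ ≤ C * ((‖g‖₊ : ℝ≥0∞) * ‖g‖₊) + C * ((‖f‖₊ : ℝ≥0∞) * ‖f‖₊) := by
            gcongr ?_ + ?_
            · calc ∑' u, ∑' v, (‖k u v‖₊ : ℝ≥0∞) * ((‖g u‖₊ : ℝ≥0∞) * ‖g u‖₊)
                  = ∑' u, ((‖g u‖₊ : ℝ≥0∞) * ‖g u‖₊) * ∑' v, (‖k u v‖₊ : ℝ≥0∞) := by
                    refine tsum_congr fun u => ?_
                    rw [ENNReal.tsum_mul_left.symm]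
                    exact tsum_congr fun v => by ring
                _ ≤ ∑' u, ((‖g u‖₊ : ℝ≥0∞) * ‖g u‖₊) * C :=
                    ENNReal.tsum_le_tsum fun u => mul_le_mul_right (hrow u) _
                _ = C * ((‖g‖₊ : ℝ≥0∞) * ‖g‖₊) := by
                    rw [ENNReal.tsum_mul_right, lp2_tsum_sq, mul_comm]
            · calc ∑' u, ∑' v, (‖k u v‖₊ : ℝ≥0∞) * ((‖f v‖₊ : ℝ≥0∞) * ‖f v‖₊)
                  = ∑' v, ((‖f v‖₊ : ℝ≥0∞) * ‖f v‖₊) * ∑' u, (‖k u v‖₊ : ℝ≥0∞) := by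
                    rw [ENNReal.tsum_comm]
                    refine tsum_congr fun v => ?_
                    rw [ENNReal.tsum_mul_left.symm]
                    exact tsum_congr fun u => by ring
                _ ≤ ∑' v, ((‖f v‖₊ : ℝ≥0∞) * ‖f v‖₊) * C :=
                    ENNReal.tsum_le_tsum fun v => mul_le_mul_right (hcol v) _
                _ = C * ((‖f‖₊ : ℝ≥0∞) * ‖f‖₊) := by
                    rw [ENNReal.tsum_mul_right, lp2_tsum_sq, mul_comm]
    have hgn : (‖g‖₊ : ℝ≥0∞) * ‖g‖₊ ≤ 1 := by
      have h1 : (‖g‖₊ : ℝ≥0∞) ≤ 1 := by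
        rw [← ofReal_norm_eq_coe_nnnorm]
        simpa using ENNReal.ofReal_le_ofReal hg
      calc (‖g‖₊ : ℝ≥0∞) * ‖g‖₊ ≤ 1 * 1 := mul_le_mul' h1 h1
        _ = 1 := by norm_num
    have hfn : (‖f‖₊ : ℝ≥0∞) * ‖f‖₊ ≤ 1 := by
      have h1 : (‖f‖₊ : ℝ≥0∞) ≤ 1 := by
        rw [← ofReal_norm_eq_coe_nnnorm]
        simpa using ENNReal.ofReal_le_ofReal hf
      calc (‖f‖₊ : ℝ≥0∞) * ‖f‖₊ ≤ 1 * 1 := mul_le_mul' h1 h1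
        _ = 1 := by norm_num
    have h2 : (2:ℝ≥0∞) ≠ 0 := by norm_num
    have h2' : (2:ℝ≥0∞) ≠ ⊤ := by norm_num
    have final : (‖(inner ℂ g (T f) : ℂ)‖₊ : ℝ≥0∞) * 2 ≤ C * 2 := by
      calc (‖(inner ℂ g (T f) : ℂ)‖₊ : ℝ≥0∞) * 2
          ≤ (∑' u, ∑' v, (‖g u‖₊ : ℝ≥0∞) * ‖k u v‖₊ * ‖f v‖₊) * 2 :=
            mul_le_mul_left step3 _
        _ ≤ C * ((‖g‖₊ : ℝ≥0∞) * ‖g‖₊) + C * ((‖f‖₊ : ℝ≥0∞) * ‖f‖₊) := step4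
        _ ≤ C * 1 + C * 1 := by gcongr
        _ = C * 2 := by ring
    exact (ENNReal.mul_le_mul_iff_left h2 h2').mp final
  refine ContinuousLinearMap.opNorm_le_bound T hc fun f => ?_
  by_cases hf0 : f = 0
  · simp [hf0]
  have hfpos : 0 < ‖f‖ := norm_pos_iff.mpr hf0
  set f' : lp (fun _ : Γ => ℂ) 2 := ((‖f‖⁻¹ : ℝ) : ℂ) • f with hf'
  have hf'norm : ‖f'‖ = 1 := by
    have h1 : ‖((‖f‖⁻¹ : ℝ) : ℂ)‖ = ‖f‖⁻¹ := by
      rw [Complex.norm_real, Real.norm_eq_abs, abs_of_pos (inv_pos.mpr hfpos)]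
    rw [hf', norm_smul, h1, inv_mul_cancel₀ hfpos.ne']
  have hTf' : ‖T f'‖ ≤ c := by
    by_cases h0 : T f' = 0
    · rw [h0]; simpa using hc
    have hTpos : 0 < ‖T f'‖ := norm_pos_iff.mpr h0
    set g : lp (fun _ : Γ => ℂ) 2 := ((‖T f'‖⁻¹ : ℝ) : ℂ) • (T f') with hgdef
    have hgnorm : ‖g‖ = 1 := by
      have h1 : ‖((‖T f'‖⁻¹ : ℝ) : ℂ)‖ = ‖T f'‖⁻¹ := by
        rw [Complex.norm_real, Real.norm_eq_abs, abs_of_pos (inv_pos.mpr hTpos)]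
      rw [hgdef, norm_smul, h1, inv_mul_cancel₀ hTpos.ne']
    have hinner : (inner ℂ g (T f') : ℂ) = ((‖T f'‖ : ℝ) : ℂ) := by
      rw [hgdef, inner_smul_left, inner_self_eq_norm_sq_to_K]
      have hne : ((‖T f'‖ : ℝ) : ℂ) ≠ 0 := Complex.ofReal_ne_zero.mpr hTpos.ne'
      rw [Complex.conj_ofReal]
      push_cast
      field_simp
      norm_cast
    have hkey := key f' g (le_of_eq hf'norm) (le_of_eq hgnorm)
    rw [← ofReal_norm_eq_coe_nnnorm, ENNReal.ofReal_le_ofReal_iff hc, hinner] at hkey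
    simpa [abs_of_pos hTpos] using hkey
  have hTf : T f = ((‖f‖ : ℝ) : ℂ) • T f' := by
    rw [hf', map_smul, smul_smul]
    norm_cast
    rw [mul_inv_cancel₀ hfpos.ne']
    exact (one_smul _ _).symm
  rw [hTf, norm_smul]
  simp only [Complex.norm_real, Real.norm_eq_abs, abs_of_pos hfpos]
  calc ‖f‖ * ‖T f'‖ ≤ ‖f‖ * c := by gcongr
    _ = c * ‖f‖ := mul_comm _ _

/-! ### Resolvent norm bound -/

lemma resolvent_norm_le' {E : Type*} [NormedAddCommGroup E] [InnerProductSpace ℂ E]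
    [CompleteSpace E]
    (H : E →L[ℂ] E) (hH : IsSelfAdjoint H) (z : ℂ)
    (R : E →L[ℂ] E)
    (hR₁ : R * (H - z • 1) = 1) (hR₂ : (H - z • 1) * R = 1)
    (hΔ : 0 < Metric.infDist z (spectrum ℂ H)) :
    ‖R‖ ≤ (Metric.infDist z (spectrum ℂ H))⁻¹ := by
  set Δ := Metric.infDist z (spectrum ℂ H) with hΔdef
  set u : (E →L[ℂ] E)ˣ := ⟨H - z • 1, R, hR₂, hR₁⟩ with hu
  have hca : ∀ (c : ℂ) (T : E →L[ℂ] E), Commute (c • 1) T := by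
    intro c T
    show (c • 1) * T = T * (c • 1)
    rw [smul_mul_assoc, mul_smul_comm, one_mul, mul_one]
  have hstar : star (H - z • 1) = H - (starRingEnd ℂ z) • 1 := by
    simp [star_sub, star_smul, hH.star_eq]
  have hcomm : Commute (H - z • 1) (star (H - z • 1)) := by
    rw [hstar]
    exact ((Commute.refl H).sub_right ((hca _ H).symm)).sub_left
      ((hca z H).sub_right (hca z _))
  have hnormalR : IsStarNormal R := by
    constructor
    have h1 : R = ↑u⁻¹ := rfl
    have h2 : star R = ↑(star u)⁻¹ := by
      rw [h1, ← Units.coe_star_inv]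
    have hcu : Commute (↑u : E →L[ℂ] E) ↑(star u) := hcomm
    have hci : Commute (↑u⁻¹ : E →L[ℂ] E) ↑(star u)⁻¹ :=
      (hcu.units_inv_left).units_inv_right
    show Commute (star R) R
    rw [h2]
    exact hci.symm
  have hrad : spectralRadius ℂ R = ‖R‖₊ := IsStarNormal.spectralRadius_eq_nnnorm R
  have hspec_le : spectralRadius ℂ R ≤ ENNReal.ofReal Δ⁻¹ := by
    rw [spectralRadius]
    refine iSup₂_le fun k hk => ?_
    by_cases hk0 : k = 0
    · simp [hk0]
    have hk' : k ∈ spectrum ℂ (↑u⁻¹ : E →L[ℂ] E) := hk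
    rw [← spectrum.map_inv] at hk'
    have hkinv : k⁻¹ ∈ spectrum ℂ (H - z • 1) := Set.mem_inv.mp hk'
    have hzsmul : (z • 1 : E →L[ℂ] E) = algebraMap ℂ (E →L[ℂ] E) z :=
      (Algebra.algebraMap_eq_smul_one z).symm
    rw [hzsmul, ← spectrum.sub_singleton_eq] at hkinv
    obtain ⟨w, hw, v, hv, hwv⟩ := Set.mem_sub.mp hkinv
    rw [Set.mem_singleton_iff] at hv
    rw [hv] at hwv
    have hdist : Δ ≤ ‖w - z‖ := by
      rw [hΔdef]
      calc Metric.infDist z (spectrum ℂ H) ≤ dist z w := Metric.infDist_le_dist_of_mem hw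
        _ = ‖w - z‖ := by rw [dist_eq_norm, norm_sub_rev]
    have hnk : ‖k‖ ≤ Δ⁻¹ := by
      have h1 : ‖k⁻¹‖ = ‖k‖⁻¹ := norm_inv k
      have h2 : Δ ≤ ‖k‖⁻¹ := by rw [← h1, ← hwv]; exact hdist
      calc ‖k‖ = (‖k‖⁻¹)⁻¹ := by rw [inv_inv]
        _ ≤ Δ⁻¹ := inv_anti₀ hΔ h2
    calc (‖k‖₊ : ℝ≥0∞) = ENNReal.ofReal ‖k‖ := (ofReal_norm_eq_coe_nnnorm k).symm
      _ ≤ ENNReal.ofReal Δ⁻¹ := ENNReal.ofReal_le_ofReal hnk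
  rw [hrad, ← ofReal_norm_eq_coe_nnnorm] at hspec_le
  exact (ENNReal.ofReal_le_ofReal_iff (by positivity)).mp hspec_le

end AizenmanAux


open AizenmanAux



open scoped ENNReal

/-- **Combes–Thomas / Aizenman estimate.** Let `Γ` be a countable metric space and `H` a
bounded self-adjoint operator on `ℓ²(Γ)` whose off-diagonal matrix entries satisfy
`∑_{y ≠ x} |H(x,y)| e^{α dist(x,y)} ≤ S < ∞` for some `α > 0`.  Then for `z` outside the
spectrum of `H`, with `Δ = dist(z, σ(H)) > 0`, the entries of the resolvent `R = (H - z)⁻¹`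
satisfy `|R(x,y)| ≤ (2/Δ) exp(-(αΔ/(Δ + 2S)) · dist(x,y))`. -/
theorem aizenman_resolvent_decay
    {Γ : Type*} [Countable Γ] [DecidableEq Γ] [MetricSpace Γ]
    (H : lp (fun _ : Γ => ℂ) 2 →L[ℂ] lp (fun _ : Γ => ℂ) 2)
    (hH : IsSelfAdjoint H)
    (α S : ℝ) (hα : 0 < α)
    (hsum : ∀ x : Γ, Summable (fun y : {y : Γ // y ≠ x} =>
      ‖(inner ℂ (lp.single 2 (y : Γ) (1 : ℂ)) (H (lp.single 2 x (1 : ℂ))) : ℂ)‖ *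
        Real.exp (α * dist x (y : Γ))))
    (hS : ∀ x : Γ, (∑' y : {y : Γ // y ≠ x},
      ‖(inner ℂ (lp.single 2 (y : Γ) (1 : ℂ)) (H (lp.single 2 x (1 : ℂ))) : ℂ)‖ *
        Real.exp (α * dist x (y : Γ))) ≤ S)
    (z : ℂ) (hz : z ∉ spectrum ℂ H)
    (hΔ : 0 < Metric.infDist z (spectrum ℂ H))
    (R : lp (fun _ : Γ => ℂ) 2 →L[ℂ] lp (fun _ : Γ => ℂ) 2)
    (hR₁ : R * (H - z • 1) = 1) (hR₂ : (H - z • 1) * R = 1)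
    (x y : Γ) :
    ‖(inner ℂ (lp.single 2 x (1 : ℂ)) (R (lp.single 2 y (1 : ℂ))) : ℂ)‖ ≤
      2 / Metric.infDist z (spectrum ℂ H) *
        Real.exp (-(α * Metric.infDist z (spectrum ℂ H) /
          (Metric.infDist z (spectrum ℂ H) + 2 * S)) * dist x y) := by
  classical
  -- rewrite the hypotheses in terms of matrix entries
  have hsum' : ∀ u : Γ, Summable (fun v : {v : Γ // v ≠ u} =>
      ‖ent H (v : Γ) u‖ * Real.exp (α * dist u (v : Γ))) := by
    intro u
    exact (hsum u).congr fun v => by rw [ent_eq_inner]; rfl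
  have hS' : ∀ u : Γ, (∑' v : {v : Γ // v ≠ u},
      ‖ent H (v : Γ) u‖ * Real.exp (α * dist u (v : Γ))) ≤ S := by
    intro u
    refine le_trans (le_of_eq (tsum_congr fun v => ?_)) (hS u)
    rw [ent_eq_inner]; rfl
  set Δ := Metric.infDist z (spectrum ℂ H) with hΔdef
  have hS0 : 0 ≤ S :=
    le_trans (tsum_nonneg (fun v => by positivity)) (hS' x)
  have hden : 0 < Δ + 2 * S := by linarith
  set η' : ℝ := Δ / (Δ + 2 * S) with hη'def
  have hη'pos : 0 < η' := div_pos hΔ hden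
  have hη'le1 : η' ≤ 1 := (div_le_one hden).mpr (by linarith)
  set η : ℝ := α * η' with hηdef
  have hηpos : 0 < η := mul_pos hα hη'pos
  have hηα : η ≤ α := by
    calc η = α * η' := hηdef
      _ ≤ α * 1 := mul_le_mul_of_nonneg_left hη'le1 hα.le
      _ = α := mul_one α
  have hηdiv : η / α = η' := by rw [hηdef]; field_simp
  -- the weight function
  set m : Γ → ℝ := fun u => min (dist u y) (dist x y) with hmdef
  have hm_le : ∀ u, m u ≤ dist x y := fun u => min_le_right _ _
  have hm_nonneg : ∀ u, 0 ≤ m u := fun u => le_min dist_nonneg dist_nonneg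
  have hm_lip : ∀ u v, |m u - m v| ≤ dist u v := by
    intro u v
    calc |m u - m v| ≤ |dist u y - dist v y| := min_lipschitz _ _ _
      _ ≤ dist u v := abs_dist_sub_le u v y
  have hmx : m x = dist x y := min_self _
  have hmy : m y = 0 := by
    rw [hmdef]
    simp only [dist_self]
    exact min_eq_left dist_nonneg
  set w : Γ → ℂ := fun u => ((Real.exp (η * m u) : ℝ) : ℂ) with hwdef
  set w' : Γ → ℂ := fun u => ((Real.exp (-(η * m u)) : ℝ) : ℂ) with hw'def
  set cW : ℝ := Real.exp (η * dist x y) with hcWdef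
  have hcW0 : 0 ≤ cW := (Real.exp_pos _).le
  have hwb : ∀ u, ‖w u‖ ≤ cW := by
    intro u
    rw [hwdef]
    simp only [Complex.norm_real, Real.norm_eq_abs, abs_of_pos (Real.exp_pos _)]
    exact Real.exp_le_exp.mpr (mul_le_mul_of_nonneg_left (hm_le u) hηpos.le)
  have hw'b : ∀ u, ‖w' u‖ ≤ 1 := by
    intro u
    rw [hw'def]
    simp only [Complex.norm_real, Real.norm_eq_abs, abs_of_pos (Real.exp_pos _)]
    apply Real.exp_le_one_iff.mpr
    have := mul_nonneg hηpos.le (hm_nonneg u)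
    linarith
  set W := mulOp w cW hcW0 hwb with hWdef
  set W' := mulOp w' 1 one_pos.le hw'b with hW'def
  have hprod_one : ∀ u, w u * w' u = 1 := by
    intro u
    rw [hwdef, hw'def, ← Complex.ofReal_mul, ← Real.exp_add, add_neg_cancel, Real.exp_zero,
      Complex.ofReal_one]
  have hWW' : W * W' = 1 := by
    refine ContinuousLinearMap.ext fun f => ?_
    ext u
    simp only [ContinuousLinearMap.mul_apply, ContinuousLinearMap.one_apply, hWdef, hW'def,
      mulOp_apply]
    rw [← mul_assoc, hprod_one u, one_mul]
  have hW'W : W' * W = 1 := by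
    refine ContinuousLinearMap.ext fun f => ?_
    ext u
    simp only [ContinuousLinearMap.mul_apply, ContinuousLinearMap.one_apply, hWdef, hW'def,
      mulOp_apply]
    rw [← mul_assoc, mul_comm (w' u) (w u), hprod_one u, one_mul]
  -- the conjugated perturbation K and its kernel
  set K := W * H * W' - H with hKdef
  set k : Γ → Γ → ℂ := fun u v => ent H u v * (w u * w' v - 1) with hkdef
  have hK_apply : ∀ (f : lp (fun _ : Γ => ℂ) 2) (u : Γ), (K f) u = ∑' v, k u v * f v := by
    intro f u
    have hsum1 : Summable fun v => ent H u v * (w' v * f v) :=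
      (summable_apply hH (W' f) u).congr fun v => rfl
    have hsum1' : Summable fun v => w u * (ent H u v * (w' v * f v)) := hsum1.mul_left _
    have hsum2 : Summable fun v => ent H u v * f v := summable_apply hH f u
    have h1 : ((W * H * W') f) u = w u * ∑' v, ent H u v * (w' v * f v) := by
      have e1 : ((W * H * W') f) u = w u * (H (W' f)) u := rfl
      rw [e1, apply_eq_tsum hH (W' f) u]
      rfl
    have h2 : (H f) u = ∑' v, ent H u v * f v := apply_eq_tsum hH f u
    calc (K f) u = ((W * H * W') f) u - (H f) u := rfl
      _ = (∑' v, w u * (ent H u v * (w' v * f v))) - ∑' v, ent H u v * f v := by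
          rw [h1, h2, tsum_mul_left]
      _ = ∑' v, (w u * (ent H u v * (w' v * f v)) - ent H u v * f v) :=
          (Summable.tsum_sub hsum1' hsum2).symm
      _ = ∑' v, k u v * f v := tsum_congr fun v => by rw [hkdef]; ring
  -- kernel bounds
  have hk_zero : ∀ u, k u u = 0 := by
    intro u
    rw [hkdef]
    simp only [hprod_one u, sub_self, mul_zero]
  have hk_bound : ∀ u v, ‖k u v‖ ≤ η' * (‖ent H u v‖ * Real.exp (α * dist u v)) := by
    intro u v
    have hww : w u * w' v - 1 = ((Real.exp (η * m u - η * m v) - 1 : ℝ) : ℂ) := by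
      have e0 : w u * w' v = ((Real.exp (η * m u - η * m v) : ℝ) : ℂ) := by
        show ((Real.exp (η * m u) : ℝ) : ℂ) * ((Real.exp (-(η * m v)) : ℝ) : ℂ) = _
        rw [← Complex.ofReal_mul, ← Real.exp_add, ← sub_eq_add_neg]
      rw [e0, ← Complex.ofReal_one, ← Complex.ofReal_sub]
    have habs : |Real.exp (η * m u - η * m v) - 1| ≤ η / α * Real.exp (α * dist u v) := by
      apply kernel_exp_bound hα hηpos.le hηα dist_nonneg
      have h1 : |η * m u - η * m v| = η * |m u - m v| := by
        rw [← mul_sub, abs_mul, abs_of_pos hηpos]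
      rw [h1]
      exact mul_le_mul_of_nonneg_left (hm_lip u v) hηpos.le
    calc ‖k u v‖ = ‖ent H u v‖ * ‖w u * w' v - 1‖ := by rw [hkdef]; exact norm_mul _ _
      _ ≤ ‖ent H u v‖ * (η / α * Real.exp (α * dist u v)) := by
          apply mul_le_mul_of_nonneg_left _ (norm_nonneg _)
          rw [hww, Complex.norm_real, Real.norm_eq_abs]
          exact habs
      _ = η' * (‖ent H u v‖ * Real.exp (α * dist u v)) := by rw [hηdiv]; ring
  set cK : ℝ := η' * S with hcKdef
  have hcK0 : 0 ≤ cK := mul_nonneg hη'pos.le hS0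
  -- row sums
  have hrow : ∀ u, ∑' v, (‖k u v‖₊ : ℝ≥0∞) ≤ ENNReal.ofReal cK := by
    intro u
    have hsupp : Function.support (fun v => (‖k u v‖₊ : ℝ≥0∞)) ⊆ {v : Γ | v ≠ u} := by
      intro v hv
      simp only [Set.mem_setOf_eq]
      intro hvu
      apply hv
      simp [hvu, hk_zero]
    rw [← tsum_subtype_eq_of_support_subset hsupp]
    have hsummable : Summable fun v : {v : Γ | v ≠ u} =>
        η' * (‖ent H (v : Γ) u‖ * Real.exp (α * dist u (v : Γ))) := by
      exact (hsum' u).mul_left η'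
    calc ∑' (v : {v : Γ | v ≠ u}), (‖k u (v : Γ)‖₊ : ℝ≥0∞)
        ≤ ∑' (v : {v : Γ | v ≠ u}),
            ENNReal.ofReal (η' * (‖ent H (v : Γ) u‖ * Real.exp (α * dist u (v : Γ)))) := by
          refine ENNReal.tsum_le_tsum fun v => ?_
          rw [← ofReal_norm_eq_coe_nnnorm]
          apply ENNReal.ofReal_le_ofReal
          calc ‖k u (v : Γ)‖ ≤ η' * (‖ent H u (v : Γ)‖ * Real.exp (α * dist u (v : Γ))) :=
                hk_bound u v
            _ = η' * (‖ent H (v : Γ) u‖ * Real.exp (α * dist u (v : Γ))) := by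
                rw [norm_ent_symm hH]
      _ = ENNReal.ofReal (∑' (v : {v : Γ | v ≠ u}),
            η' * (‖ent H (v : Γ) u‖ * Real.exp (α * dist u (v : Γ)))) := by
          rw [← ENNReal.ofReal_tsum_of_nonneg (fun v => by positivity) hsummable]
      _ ≤ ENNReal.ofReal cK := by
          apply ENNReal.ofReal_le_ofReal
          rw [tsum_mul_left, hcKdef]
          exact mul_le_mul_of_nonneg_left (le_trans (le_of_eq rfl) (hS' u)) hη'pos.le
  -- column sums
  have hcol : ∀ v, ∑' u, (‖k u v‖₊ : ℝ≥0∞) ≤ ENNReal.ofReal cK := by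
    intro v
    have hsupp : Function.support (fun u => (‖k u v‖₊ : ℝ≥0∞)) ⊆ {u : Γ | u ≠ v} := by
      intro u hu
      simp only [Set.mem_setOf_eq]
      intro huv
      apply hu
      simp [huv, hk_zero]
    rw [← tsum_subtype_eq_of_support_subset hsupp]
    have hsummable : Summable fun u : {u : Γ | u ≠ v} =>
        η' * (‖ent H (u : Γ) v‖ * Real.exp (α * dist v (u : Γ))) := by
      exact (hsum' v).mul_left η'
    calc ∑' (u : {u : Γ | u ≠ v}), (‖k (u : Γ) v‖₊ : ℝ≥0∞)
        ≤ ∑' (u : {u : Γ | u ≠ v}),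
            ENNReal.ofReal (η' * (‖ent H (u : Γ) v‖ * Real.exp (α * dist v (u : Γ)))) := by
          refine ENNReal.tsum_le_tsum fun u => ?_
          rw [← ofReal_norm_eq_coe_nnnorm]
          apply ENNReal.ofReal_le_ofReal
          calc ‖k (u : Γ) v‖
              ≤ η' * (‖ent H (u : Γ) v‖ * Real.exp (α * dist (u : Γ) v)) := hk_bound u v
            _ = η' * (‖ent H (u : Γ) v‖ * Real.exp (α * dist v (u : Γ))) := by
                rw [dist_comm]
      _ = ENNReal.ofReal (∑' (u : {u : Γ | u ≠ v}),
            η' * (‖ent H (u : Γ) v‖ * Real.exp (α * dist v (u : Γ)))) := by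
          rw [← ENNReal.ofReal_tsum_of_nonneg (fun u => by positivity) hsummable]
      _ ≤ ENNReal.ofReal cK := by
          apply ENNReal.ofReal_le_ofReal
          rw [tsum_mul_left, hcKdef]
          exact mul_le_mul_of_nonneg_left (hS' v) hη'pos.le
  have hKnorm : ‖K‖ ≤ cK := schur_bound K k hK_apply cK hcK0 hrow hcol
  have hRnorm : ‖R‖ ≤ Δ⁻¹ := resolvent_norm_le' H hH z R hR₁ hR₂ hΔ
  -- Neumann series bound
  have hRK : ‖R * K‖ ≤ S / (Δ + 2 * S) := by
    calc ‖R * K‖ ≤ ‖R‖ * ‖K‖ := norm_mul_le R K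
      _ ≤ Δ⁻¹ * cK := mul_le_mul hRnorm hKnorm (norm_nonneg K) (by positivity)
      _ = S / (Δ + 2 * S) := by
          rw [hcKdef, hη'def]
          field_simp
          try ring
  have hq1 : S / (Δ + 2 * S) < 1 := (div_lt_one hden).mpr (by linarith)
  have hqhalf : S / (Δ + 2 * S) ≤ 1 / 2 := by
    rw [div_le_div_iff₀ hden (by norm_num)]
    linarith
  have hRKlt : ‖-(R * K)‖ < 1 := by rw [norm_neg]; exact lt_of_le_of_lt hRK hq1
  set vU : (lp (fun _ : Γ => ℂ) 2 →L[ℂ] lp (fun _ : Γ => ℂ) 2)ˣ :=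
    Units.oneSub (-(R * K)) hRKlt with hvUdef
  set u₀ : (lp (fun _ : Γ => ℂ) 2 →L[ℂ] lp (fun _ : Γ => ℂ) 2)ˣ :=
    ⟨H - z • 1, R, hR₂, hR₁⟩ with hu₀def
  set Bu := u₀ * vU with hBudef
  have hBval : (↑Bu : lp (fun _ : Γ => ℂ) 2 →L[ℂ] lp (fun _ : Γ => ℂ) 2)
      = W * (H - z • 1) * W' := by
    have hL : (↑Bu : lp (fun _ : Γ => ℂ) 2 →L[ℂ] lp (fun _ : Γ => ℂ) 2)
        = W * H * W' - z • 1 := by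
      calc (↑Bu : lp (fun _ : Γ => ℂ) 2 →L[ℂ] lp (fun _ : Γ => ℂ) 2)
          = (H - z • 1) * (1 + R * K) := by
            rw [hBudef, Units.val_mul, hu₀def, hvUdef, Units.val_oneSub, sub_neg_eq_add]
        _ = (H - z • 1) + (H - z • 1) * (R * K) := by rw [mul_add, mul_one]
        _ = (H - z • 1) + K := by rw [← mul_assoc, hR₂, one_mul]
        _ = W * H * W' - z • 1 := by rw [hKdef]; abel
    have hR' : W * (H - z • 1) * W' = W * H * W' - z • 1 := by
      have e1 : W * (z • 1) * W' = z • (1 : lp (fun _ : Γ => ℂ) 2 →L[ℂ] lp (fun _ : Γ => ℂ) 2) := by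
        rw [mul_smul_comm, mul_one, smul_mul_assoc, hWW']
      calc W * (H - z • 1) * W' = W * H * W' - W * (z • 1) * W' := by
            rw [mul_sub, sub_mul]
        _ = W * H * W' - z • 1 := by rw [e1]
    rw [hL, hR']
  set A := W * R * W' with hAdef
  have hBA : (↑Bu : lp (fun _ : Γ => ℂ) 2 →L[ℂ] lp (fun _ : Γ => ℂ) 2) * A = 1 := by
    rw [hBval, hAdef]
    calc W * (H - z • 1) * W' * (W * R * W')
        = W * ((H - z • 1) * (W' * (W * (R * W')))) := by simp only [mul_assoc]
      _ = W * ((H - z • 1) * (R * W')) := by rw [← mul_assoc W' W, hW'W, one_mul]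
      _ = W * ((H - z • 1) * R * W') := by rw [mul_assoc (H - z • 1) R W']
      _ = W * W' := by rw [hR₂, one_mul]
      _ = 1 := hWW'
  have hAeq : A = ↑Bu⁻¹ := by
    calc A = 1 * A := (one_mul A).symm
      _ = ↑Bu⁻¹ * ↑Bu * A := by rw [Units.inv_mul]
      _ = ↑Bu⁻¹ * (↑Bu * A) := by rw [mul_assoc]
      _ = ↑Bu⁻¹ * 1 := by rw [hBA]
      _ = ↑Bu⁻¹ := mul_one _
  have hvUinv : ‖(↑vU⁻¹ : lp (fun _ : Γ => ℂ) 2 →L[ℂ] lp (fun _ : Γ => ℂ) 2)‖ ≤ 2 := by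
    have h1 : (↑vU⁻¹ : lp (fun _ : Γ => ℂ) 2 →L[ℂ] lp (fun _ : Γ => ℂ) 2)
        = ∑' n : ℕ, (-(R * K)) ^ n := rfl
    rw [h1]
    have h2 := tsum_geometric_le_of_norm_lt_one (-(R * K)) hRKlt
    have h3 : ‖(1 : lp (fun _ : Γ => ℂ) 2 →L[ℂ] lp (fun _ : Γ => ℂ) 2)‖ ≤ 1 :=
      ContinuousLinearMap.norm_id_le
    have h4 : (1 - ‖-(R * K)‖)⁻¹ ≤ 2 := by
      rw [norm_neg]
      have h5 : (1:ℝ)/2 ≤ 1 - ‖R * K‖ := by linarith [le_trans hRK hqhalf]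
      calc (1 - ‖R * K‖)⁻¹ ≤ ((1:ℝ)/2)⁻¹ := inv_anti₀ (by norm_num) h5
        _ = 2 := by norm_num
    linarith
  have hAnorm : ‖A‖ ≤ 2 / Δ := by
    rw [hAeq]
    have h1 : (↑Bu⁻¹ : lp (fun _ : Γ => ℂ) 2 →L[ℂ] lp (fun _ : Γ => ℂ) 2)
        = ↑vU⁻¹ * ↑u₀⁻¹ := by
      rw [hBudef, mul_inv_rev, Units.val_mul]
    have h2 : (↑u₀⁻¹ : lp (fun _ : Γ => ℂ) 2 →L[ℂ] lp (fun _ : Γ => ℂ) 2) = R := rfl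
    rw [h1, h2]
    calc ‖(↑vU⁻¹ : lp (fun _ : Γ => ℂ) 2 →L[ℂ] lp (fun _ : Γ => ℂ) 2) * R‖
        ≤ ‖(↑vU⁻¹ : lp (fun _ : Γ => ℂ) 2 →L[ℂ] lp (fun _ : Γ => ℂ) 2)‖ * ‖R‖ :=
          norm_mul_le _ _
      _ ≤ 2 * Δ⁻¹ := mul_le_mul hvUinv hRnorm (norm_nonneg _) (by norm_num)
      _ = 2 / Δ := by rw [div_eq_mul_inv]
  -- compute the matrix entry of A
  have hW'y : W' (dl y) = dl y := by
    ext u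
    by_cases h : u = y
    · subst h
      rw [hW'def, mulOp_apply]
      show w' u * (dl u : ∀ _, ℂ) u = (dl u : ∀ _, ℂ) u
      rw [dl, lp.single_apply_self]
      rw [hw'def]
      simp only [hmy]
      norm_num
    · rw [hW'def, mulOp_apply]
      show w' u * (dl y : ∀ _, ℂ) u = (dl y : ∀ _, ℂ) u
      rw [dl, lp.single_apply_ne _ _ _ h, mul_zero]
  have hentry : (inner ℂ (dl x) (A (dl y)) : ℂ)
      = ((cW : ℝ) : ℂ) * (inner ℂ (dl x) (R (dl y)) : ℂ) := by
    have e1 : A (dl y) = W (R (dl y)) := by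
      rw [hAdef]
      show W ((R (W' (dl y)))) = W (R (dl y))
      rw [hW'y]
    rw [inner_single_left, inner_single_left, e1]
    rw [hWdef, mulOp_apply]
    congr 1
    show ((Real.exp (η * m x) : ℝ) : ℂ) = ((cW : ℝ) : ℂ)
    rw [hmx, hcWdef]
  have hfinal : ‖(inner ℂ (dl x) (A (dl y)) : ℂ)‖ ≤ 2 / Δ := by
    calc ‖(inner ℂ (dl x) (A (dl y)) : ℂ)‖ ≤ ‖(dl x : lp (fun _ : Γ => ℂ) 2)‖ * ‖A (dl y)‖ :=
          norm_inner_le_norm _ _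
      _ ≤ 1 * (‖A‖ * ‖(dl y : lp (fun _ : Γ => ℂ) 2)‖) := by
          rw [norm_dl]
          exact mul_le_mul_of_nonneg_left (A.le_opNorm _) (by norm_num)
      _ = ‖A‖ := by rw [norm_dl]; ring
      _ ≤ 2 / Δ := hAnorm
  have hcWnorm : ‖((cW : ℝ) : ℂ)‖ = cW := by
    rw [Complex.norm_real, Real.norm_eq_abs, abs_of_pos (Real.exp_pos _)]
  have hmain : cW * ‖(inner ℂ (dl x) (R (dl y)) : ℂ)‖ ≤ 2 / Δ := by
    rw [← hcWnorm, ← norm_mul, ← hentry]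
    exact hfinal
  have hcWpos : 0 < cW := Real.exp_pos _
  have hgoal : ‖(inner ℂ (dl x) (R (dl y)) : ℂ)‖ ≤ 2 / Δ * Real.exp (-(η * dist x y)) := by
    have h1 : ‖(inner ℂ (dl x) (R (dl y)) : ℂ)‖ ≤ (2 / Δ) / cW := by
      rw [le_div_iff₀ hcWpos]
      calc ‖(inner ℂ (dl x) (R (dl y)) : ℂ)‖ * cW
          = cW * ‖(inner ℂ (dl x) (R (dl y)) : ℂ)‖ := mul_comm _ _
        _ ≤ 2 / Δ := hmain
    calc ‖(inner ℂ (dl x) (R (dl y)) : ℂ)‖ ≤ (2 / Δ) / cW := h1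
      _ = 2 / Δ * Real.exp (-(η * dist x y)) := by
          rw [hcWdef, div_eq_mul_inv (2/Δ), ← Real.exp_neg]
  have hexp : -(α * Δ / (Δ + 2 * S)) * dist x y = -(η * dist x y) := by
    rw [hηdef, hη'def]
    ring
  rw [hexp]
  exact hgoal
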